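/- For a sequence B=(b_1,...,b_n) of nonnegative integers with Berge sequence (b̄_1,...,b̄_n), for every t with 0 ≤ t ≤ n one has ∑_{i=1}^t b̄_i ≤ t(t−1) + ∑_{j=t+1}^n min{b_j, t}. -/

import Mathlib

open Finset
open Classical

/-- The pair `(A;B)` is realizable by a simple graph: there is a simple graph `G`
on vertices `v_1, …, v_n` with `a i ≤ deg(v_i) ≤ b i` for `1 ≤ i ≤ n`.
(Sequences are 1-indexed; vertex `i : Fin n` corresponds to index `i+1`.) -/
def Realizable (n : ℕ) (a b : ℕ → ℕ) : Prop :=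
  ∃ (G : SimpleGraph (Fin n)) (_ : DecidableRel G.Adj),
    ∀ i : Fin n, a (i.1 + 1) ≤ G.degree i ∧ G.degree i ≤ b (i.1 + 1)

/-- `A` and `B` are in good order: `(a_{i+1}, b_{i+1}) ⪯ (a_i, b_i)` lexicographically. -/
def GoodOrder (n : ℕ) (a b : ℕ → ℕ) : Prop :=
  ∀ i, 1 ≤ i → i + 1 ≤ n →
    a (i + 1) < a i ∨ (a (i + 1) = a i ∧ b (i + 1) ≤ b i)

/-- The set `I_t = {i : t+1 ≤ i ≤ n, b i ≥ t+1}`. -/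
def Iset (n : ℕ) (b : ℕ → ℕ) (t : ℕ) : Finset ℕ :=
  (Finset.Icc (t + 1) n).filter fun i => t + 1 ≤ b i

/-- The parity correction `ε(t)` of Cai–Deng–Zang. -/
noncomputable def eps (n : ℕ) (a b : ℕ → ℕ) (t : ℕ) : ℤ :=
  if (∀ i ∈ Iset n b t, a i = b i) ∧
      Odd (∑ i ∈ Iset n b t, b i + t * (Iset n b t).card)
  then 1 else 0

/-- `berge n b i` is the `i`-th column sum of the `n × n` 0-1 matrix in which row `k`
has its `b k` leading entries equal to `1`, skipping the diagonal entry `(k,k)`. -/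
def berge (n : ℕ) (b : ℕ → ℕ) (i : ℕ) : ℕ :=
  ((Finset.Icc 1 n).filter fun k => k ≠ i ∧ (i ≤ b k ∨ (i = b k + 1 ∧ k ≤ b k))).card

/-- The conjugate sequence: `conj n b i = |{k : 1 ≤ k ≤ n, b k ≥ i}|`. -/
def conj (n : ℕ) (b : ℕ → ℕ) (i : ℕ) : ℕ :=
  ((Finset.Icc 1 n).filter fun k => i ≤ b k).card

/-- `g = max{i : c_i ≥ i}` (0 if there is no such index). -/
def gIdx (n : ℕ) (c : ℕ → ℕ) : ℕ :=
  ((Finset.Icc 1 n).filter fun i => i ≤ c i).sup id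

/-- The Ryser modification: `c̃_i = c_i + 1` for `i ≤ g`, and `c̃_i = c_i` otherwise. -/
def tilde (n : ℕ) (c : ℕ → ℕ) (i : ℕ) : ℕ :=
  if i ≤ gIdx n c then c i + 1 else c i

/-- `s = max{i : a_i ≥ i - 1}` (0 if there is no such index). -/
def sIdx (n : ℕ) (a : ℕ → ℕ) : ℕ :=
  ((Finset.Icc 1 n).filter fun i => i ≤ a i + 1).sup id

/-- The interval pair `(S;S)` is bipartite-interval realizable: there is a bipartite
graph `F` with parts `{x_1,…,x_n}`, `{y_1,…,y_n}` (modelled on `Fin n ⊕ Fin n`, all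
edges going between the parts) with `lo i ≤ deg(x_i) ≤ hi i` and `lo i ≤ deg(y_i) ≤ hi i`. -/
def BipIntervalRealizable (n : ℕ) (lo hi : ℕ → ℕ) : Prop :=
  ∃ (F : SimpleGraph (Fin n ⊕ Fin n)) (_ : DecidableRel F.Adj),
    (∀ u v, F.Adj u v → u.isLeft ≠ v.isLeft) ∧
    (∀ i : Fin n, lo (i.1 + 1) ≤ F.degree (Sum.inl i) ∧ F.degree (Sum.inl i) ≤ hi (i.1 + 1)) ∧
    (∀ i : Fin n, lo (i.1 + 1) ≤ F.degree (Sum.inr i) ∧ F.degree (Sum.inr i) ≤ hi (i.1 + 1))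

/-- For any nonnegative integer sequence `B` with Berge sequence `b̄`, and every
`0 ≤ t ≤ n`: `∑_{i=1}^t b̄_i ≤ t(t−1) + ∑_{j=t+1}^n min{b_j, t}`. -/
theorem berge_partial_sum_le (n : ℕ) (b : ℕ → ℕ) :
    ∀ t, t ≤ n →
      ∑ i ∈ Finset.Icc 1 t, berge n b i ≤
        t * (t - 1) + ∑ j ∈ Finset.Icc (t + 1) n, min (b j) t := by
  intro t ht
  have key : ∑ i ∈ Finset.Icc 1 t, berge n b i
      = ∑ k ∈ Finset.Icc 1 n, ((Finset.Icc 1 t).filter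
          fun i => k ≠ i ∧ (i ≤ b k ∨ (i = b k + 1 ∧ k ≤ b k))).card := by
    simp only [berge, Finset.card_filter]
    rw [Finset.sum_comm]
  rw [key]
  have hIcc : ∀ m : ℕ, Finset.Icc 1 m = Finset.Ioc 0 m := by
    intro m; ext x; simp [Nat.lt_iff_add_one_le]
  rw [hIcc n, ← Finset.sum_Ioc_consecutive _ (Nat.zero_le t) ht]
  have h1 : ∑ k ∈ Finset.Ioc 0 t, ((Finset.Icc 1 t).filter
      fun i => k ≠ i ∧ (i ≤ b k ∨ (i = b k + 1 ∧ k ≤ b k))).card ≤ t * (t - 1) := by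
    calc ∑ k ∈ Finset.Ioc 0 t, ((Finset.Icc 1 t).filter
          fun i => k ≠ i ∧ (i ≤ b k ∨ (i = b k + 1 ∧ k ≤ b k))).card
        ≤ ∑ _k ∈ Finset.Ioc 0 t, (t - 1) := by
          apply Finset.sum_le_sum
          intro k hk
          simp only [Finset.mem_Ioc] at hk
          have hsub : ((Finset.Icc 1 t).filter
              fun i => k ≠ i ∧ (i ≤ b k ∨ (i = b k + 1 ∧ k ≤ b k)))
              ⊆ (Finset.Icc 1 t).erase k := by
            intro i hi
            simp only [Finset.mem_filter, Finset.mem_erase, Finset.mem_Icc] at hi ⊢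
            exact ⟨fun h => hi.2.1 h.symm, hi.1⟩
          calc _ ≤ ((Finset.Icc 1 t).erase k).card := Finset.card_le_card hsub
            _ = t - 1 := by
              rw [Finset.card_erase_of_mem (by simp [Finset.mem_Icc]; omega),
                Nat.card_Icc]; omega
      _ = t * (t - 1) := by rw [Finset.sum_const, Nat.card_Ioc, smul_eq_mul, Nat.sub_zero, Nat.mul_comm]
  have h2 : ∑ k ∈ Finset.Ioc t n, ((Finset.Icc 1 t).filter
      fun i => k ≠ i ∧ (i ≤ b k ∨ (i = b k + 1 ∧ k ≤ b k))).card
      ≤ ∑ j ∈ Finset.Icc (t + 1) n, min (b j) t := by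
    rw [← Finset.Icc_add_one_left_eq_Ioc t n]
    apply Finset.sum_le_sum
    intro k hk
    simp only [Finset.mem_Icc] at hk
    apply le_min
    · have hsub : ((Finset.Icc 1 t).filter
          fun i => k ≠ i ∧ (i ≤ b k ∨ (i = b k + 1 ∧ k ≤ b k)))
          ⊆ Finset.Icc 1 (b k) := by
        intro i hi
        simp only [Finset.mem_filter, Finset.mem_Icc] at hi ⊢
        rcases hi.2.2 with h | h
        · exact ⟨hi.1.1, h⟩
        · omega
      calc _ ≤ (Finset.Icc 1 (b k)).card := Finset.card_le_card hsub
        _ = b k := by rw [Nat.card_Icc]; omega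
    · calc _ ≤ (Finset.Icc 1 t).card := Finset.card_le_card (Finset.filter_subset _ _)
        _ = t := by rw [Nat.card_Icc]; omega
  exact Nat.add_le_add h1 h2
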